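/- Let (ε_i)_{i≥1} be i.i.d. standard Gaussian random variables on a probability space, let Z_0 = 0 and Z_k = ε_1 + … + ε_k, and let F_k = σ(ε_1, …, ε_k). Fix n ≥ 1, real numbers a and b, and set h = exp(b(Z_n − a)). Then for every 1 ≤ k ≤ n, almost surely E[ ( E[h | F_k] )² | F_{k-1} ] = exp( (n−k) b² + 2b² + 2b (Z_{k-1} − a) ). Consequently, for 1 ≤ k ≤ n−1, almost surely √( E[(E[h|F_{k+1}])² | F_k] / E[(E[h|F_k])² | F_{k-1}] ) = exp( −b²/2 + b (Z_k − Z_{k-1}) ). -/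

import Mathlib

open MeasureTheory ProbabilityTheory
open scoped NNReal ENNReal

/-- The σ-algebra `σ(ε_1, …, ε_k)` generated by the first `k` steps of a walk. -/
def walkFiltration {Ω : Type*} (ε : ℕ → Ω → ℝ) (k : ℕ) : MeasurableSpace Ω :=
  ⨆ i ∈ Finset.Icc 1 k, MeasurableSpace.comap (ε i) inferInstance

section Aux

open Real

lemma gaussian_pdf_mul_exp (t x : ℝ) :
    gaussianPDFReal 0 1 x * Real.exp (t * x)
      = Real.exp (t ^ 2 / 2) * gaussianPDFReal t 1 x := by
  simp only [gaussianPDFReal, NNReal.coe_one, mul_one, sub_zero]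
  rw [mul_assoc, ← Real.exp_add, mul_comm (Real.exp (t ^ 2 / 2)), mul_assoc, ← Real.exp_add]
  congr 1
  ring

lemma integrable_exp_mul_gaussian (t : ℝ) :
    Integrable (fun x => Real.exp (t * x)) (gaussianReal 0 1) := by
  rw [gaussianReal_of_var_ne_zero 0 one_ne_zero, gaussianPDF_def]
  rw [show (fun x => ENNReal.ofReal (gaussianPDFReal 0 1 x))
      = fun x => ((Real.toNNReal (gaussianPDFReal 0 1 x) : ℝ≥0) : ℝ≥0∞) from rfl]
  rw [integrable_withDensity_iff_integrable_smul
    (f := fun x => (gaussianPDFReal 0 1 x).toNNReal)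
    (measurable_real_toNNReal.comp (measurable_gaussianPDFReal 0 1))]
  have hrw : (fun x => (Real.toNNReal (gaussianPDFReal 0 1 x) : ℝ≥0) • Real.exp (t * x))
      = fun x => Real.exp (t ^ 2 / 2) * gaussianPDFReal t 1 x := by
    funext x
    rw [NNReal.smul_def, Real.coe_toNNReal _ (gaussianPDFReal_nonneg 0 1 x)]
    exact gaussian_pdf_mul_exp t x
  rw [hrw]
  exact (integrable_gaussianPDFReal t 1).const_mul _

lemma integral_exp_mul_gaussian (t : ℝ) :
    ∫ x, Real.exp (t * x) ∂(gaussianReal 0 1) = Real.exp (t ^ 2 / 2) := by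
  rw [gaussianReal_of_var_ne_zero 0 one_ne_zero, gaussianPDF_def]
  rw [show (fun x => ENNReal.ofReal (gaussianPDFReal 0 1 x))
      = fun x => ((Real.toNNReal (gaussianPDFReal 0 1 x) : ℝ≥0) : ℝ≥0∞) from rfl]
  rw [integral_withDensity_eq_integral_smul
    (f := fun x => (gaussianPDFReal 0 1 x).toNNReal)
    (measurable_real_toNNReal.comp (measurable_gaussianPDFReal 0 1))]
  have hrw : (fun x => (Real.toNNReal (gaussianPDFReal 0 1 x) : ℝ≥0) • Real.exp (t * x))
      = fun x => Real.exp (t ^ 2 / 2) * gaussianPDFReal t 1 x := by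
    funext x
    rw [NNReal.smul_def, Real.coe_toNNReal _ (gaussianPDFReal_nonneg 0 1 x)]
    exact gaussian_pdf_mul_exp t x
  rw [show (fun x => (Real.toNNReal (gaussianPDFReal 0 1 x) : ℝ≥0) • Real.exp (t * x)) = _ from hrw]
  rw [integral_const_mul, integral_gaussianPDFReal_eq_one t one_ne_zero, mul_one]

lemma indep_mono {Ω : Type*} {mΩ : MeasurableSpace Ω} {μ : Measure Ω}
    {m₁ m₂ m₁' m₂' : MeasurableSpace Ω}
    (h : Indep m₁ m₂ μ) (h1 : m₁' ≤ m₁) (h2 : m₂' ≤ m₂) : Indep m₁' m₂' μ := by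
  rw [Indep_iff] at h ⊢
  exact fun t1 t2 ht1 ht2 => h t1 t2 (h1 _ ht1) (h2 _ ht2)

end Aux

set_option maxHeartbeats 2000000 in
/-- **Conditional second moments for the Gaussian random walk toy example.**
For the Gaussian random walk `Z_k = ε_1 + … + ε_k` and `h = exp(b(Z_n − a))`,
one has a.s. `E[(E[h|F_k])²|F_{k-1}] = exp((n−k)b² + 2b² + 2b(Z_{k-1} − a))` for
`1 ≤ k ≤ n`, and consequently for `1 ≤ k ≤ n−1` the optimal-potential ratio is
`√(E[(E[h|F_{k+1}])²|F_k] / E[(E[h|F_k])²|F_{k-1}]) = exp(−b²/2 + b(Z_k − Z_{k-1}))`. -/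
theorem gaussian_walk_optimal_potential {Ω : Type*} [MeasurableSpace Ω]
    (μ : Measure Ω) [IsProbabilityMeasure μ]
    (ε : ℕ → Ω → ℝ) (hmeas : ∀ i, Measurable (ε i))
    (hindep : iIndepFun ε μ)
    (hgauss : ∀ i, 1 ≤ i → μ.map (ε i) = gaussianReal 0 1)
    (Z : ℕ → Ω → ℝ) (hZ : ∀ k ω, Z k ω = ∑ i ∈ Finset.Icc 1 k, ε i ω)
    (n : ℕ) (hn : 1 ≤ n) (a b : ℝ)
    (h : Ω → ℝ) (hh : h = fun ω => Real.exp (b * (Z n ω - a))) :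
    (∀ k, 1 ≤ k → k ≤ n → ∀ᵐ ω ∂μ,
      (μ[fun ω' => ((μ[h | walkFiltration ε k]) ω') ^ 2 |
          walkFiltration ε (k - 1)]) ω =
        Real.exp ((n - k : ℕ) * b ^ 2 + 2 * b ^ 2 + 2 * b * (Z (k - 1) ω - a))) ∧
    (∀ k, 1 ≤ k → k ≤ n - 1 → ∀ᵐ ω ∂μ,
      Real.sqrt
          ((μ[fun ω' => ((μ[h | walkFiltration ε (k + 1)]) ω') ^ 2 |
              walkFiltration ε k]) ω /
            (μ[fun ω' => ((μ[h | walkFiltration ε k]) ω') ^ 2 |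
              walkFiltration ε (k - 1)]) ω) =
        Real.exp (-b ^ 2 / 2 + b * (Z k ω - Z (k - 1) ω))) := by
  subst hh
  -- basic measurability facts
  have hF_le : ∀ k, walkFiltration ε k ≤ ‹MeasurableSpace Ω› := fun k =>
    iSup₂_le fun i _ => (hmeas i).comap_le
  have hεF : ∀ k i, i ∈ Finset.Icc 1 k → Measurable[walkFiltration ε k] (ε i) := fun k i hi =>
    Measurable.of_comap_le (le_iSup₂ (f := fun i _ => MeasurableSpace.comap (ε i) inferInstance) i hi)
  have hZF : ∀ k, Measurable[walkFiltration ε k] (Z k) := by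
    intro k
    have hE : Z k = fun ω => ∑ i ∈ Finset.Icc 1 k, ε i ω := funext fun ω => hZ k ω
    rw [hE]
    exact Finset.measurable_sum _ fun i hi => hεF k i hi
  have hZdiff : ∀ j k : ℕ, j ≤ k → ∀ ω, Z k ω - Z j ω = ∑ i ∈ Finset.Ioc j k, ε i ω := by
    intro j k hjk ω
    have h0 : ∀ m : ℕ, Finset.Icc 1 m = Finset.Ioc 0 m := fun m => Finset.Icc_add_one_left_eq_Ioc 0 m
    have hu : Finset.Ioc 0 j ∪ Finset.Ioc j k = Finset.Ioc 0 k :=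
      Finset.Ioc_union_Ioc_eq_Ioc (Nat.zero_le j) hjk
    have hd : Disjoint (Finset.Ioc 0 j) (Finset.Ioc j k) := by
      rw [Finset.disjoint_left]
      intro i hi hi'
      simp only [Finset.mem_Ioc] at hi hi'
      omega
    have := Finset.sum_union hd (f := fun i => ε i ω)
    rw [hu] at this
    rw [hZ, hZ, h0, h0, this]
    ring
  -- integrability of exponentials of the steps
  have hint_eps : ∀ (t : ℝ) (i : ℕ), 1 ≤ i → Integrable (fun ω => Real.exp (t * ε i ω)) μ := by
    intro t i hi
    have h1 : AEStronglyMeasurable (fun x : ℝ => Real.exp (t * x)) (μ.map (ε i)) :=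
      ((measurable_id.const_mul t).exp).aestronglyMeasurable
    have h2 : Integrable (fun x : ℝ => Real.exp (t * x)) (μ.map (ε i)) := by
      rw [hgauss i hi]; exact integrable_exp_mul_gaussian t
    exact (integrable_map_measure h1 (hmeas i).aemeasurable).mp h2
  have hint_sum : ∀ (t : ℝ) (s : Finset ℕ), (∀ i ∈ s, 1 ≤ i) →
      Integrable (fun ω => Real.exp (t * (∑ i ∈ s, ε i) ω)) μ := fun t s hs =>
    hindep.integrable_exp_mul_sum hmeas fun i hi => hint_eps t i (hs i hi)
  have hmgf : ∀ (t : ℝ) (i : ℕ), 1 ≤ i → mgf (ε i) μ t = Real.exp (t ^ 2 / 2) := by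
    intro t i hi
    have h1 : AEStronglyMeasurable (fun x : ℝ => Real.exp (t * x)) (μ.map (ε i)) :=
      ((measurable_id.const_mul t).exp).aestronglyMeasurable
    have h2 : mgf (ε i) μ t = ∫ x, Real.exp (t * x) ∂(μ.map (ε i)) :=
      (integral_map (hmeas i).aemeasurable h1).symm
    rw [h2, hgauss i hi, integral_exp_mul_gaussian]
  -- the key conditional expectation computation
  have key : ∀ j m : ℕ, j ≤ m → ∀ c d e : ℝ,
      μ[(fun ω => Real.exp (e + d * Z j ω) * Real.exp (c * (Z m ω - Z j ω))) |
          walkFiltration ε j]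
        =ᵐ[μ] fun ω => Real.exp (e + d * Z j ω) * Real.exp ((m - j : ℕ) * c ^ 2 / 2) := by
    intro j m hjm c d e
    set f : Ω → ℝ := fun ω => Real.exp (e + d * Z j ω) with hfdef
    set S : Ω → ℝ := fun ω => ∑ i ∈ Finset.Ioc j m, ε i ω with hSdef
    set g : Ω → ℝ := fun ω => Real.exp (c * S ω) with hgdef
    set G : MeasurableSpace Ω :=
      ⨆ i ∈ Finset.Ioc j m, MeasurableSpace.comap (ε i) inferInstance with hGdef
    have hG_le : G ≤ _ := iSup₂_le fun i _ => (hmeas i).comap_le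
    have hSmeasG : Measurable[G] S :=
      Finset.measurable_sum _ fun i hi => Measurable.of_comap_le (le_iSup₂ (f := fun i _ => MeasurableSpace.comap (ε i) inferInstance) i hi)
    have hgmeasG : StronglyMeasurable[G] g :=
      ((hSmeasG.const_mul c).exp).stronglyMeasurable
    have hIndep : Indep G (walkFiltration ε j) μ := by
      have hd : Disjoint (↑(Finset.Ioc j m) : Set ℕ) (↑(Finset.Icc 1 j) : Set ℕ) := by
        rw [Finset.disjoint_coe, Finset.disjoint_left]
        intro i hi hi'
        simp only [Finset.mem_Ioc, Finset.mem_Icc] at hi hi'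
        omega
      exact indep_iSup_of_disjoint (fun i => (hmeas i).comap_le) hindep hd
    -- conditional expectation of g
    have hcond_g := condExp_indep_eq hG_le (hF_le j) hgmeasG hIndep
    -- the integral of g
    have hEg : (∫ ω, g ω ∂μ) = Real.exp ((m - j : ℕ) * c ^ 2 / 2) := by
      have hg1 : (∫ ω, g ω ∂μ) = mgf (∑ i ∈ Finset.Ioc j m, ε i) μ c := by
        simp only [mgf]
        congr 1
        funext ω
        simp only [hgdef, hSdef, Finset.sum_apply]
      rw [hg1, hindep.mgf_sum hmeas (Finset.Ioc j m),
        Finset.prod_congr rfl fun i hi => hmgf c i (by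
          simp only [Finset.mem_Ioc] at hi; omega),
        Finset.prod_const, Nat.card_Ioc, ← Real.exp_nat_mul]
      congr 1
      ring
    -- integrability
    have hf_int : Integrable f μ := by
      have h0 : Integrable (fun ω => Real.exp (d * (∑ i ∈ Finset.Icc 1 j, ε i) ω)) μ :=
        hint_sum d _ fun i hi => (Finset.mem_Icc.mp hi).1
      have hE : f = fun ω => Real.exp e * Real.exp (d * (∑ i ∈ Finset.Icc 1 j, ε i) ω) := by
        funext ω
        simp only [hfdef]
        rw [Finset.sum_apply, ← hZ, ← Real.exp_add]
      rw [hE]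
      exact h0.const_mul _
    have hg_int : Integrable g μ := by
      have h0 : Integrable (fun ω => Real.exp (c * (∑ i ∈ Finset.Ioc j m, ε i) ω)) μ :=
        hint_sum c _ fun i hi => by simp only [Finset.mem_Ioc] at hi; omega
      have hE : g = fun ω => Real.exp (c * (∑ i ∈ Finset.Ioc j m, ε i) ω) := by
        funext ω
        simp only [hgdef, hSdef, Finset.sum_apply]
      rw [hE]
      exact h0
    have hfmeas : StronglyMeasurable[walkFiltration ε j] f :=
      ((((hZF j).const_mul d).const_add e).exp).stronglyMeasurable
    have hfg_indep : IndepFun f g μ := by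
      rw [IndepFun_iff_Indep]
      exact indep_mono hIndep.symm hfmeas.measurable.comap_le hgmeasG.measurable.comap_le
    have hfg_int : Integrable (f * g) μ := hfg_indep.integrable_mul hf_int hg_int
    have hpull := condExp_mul_of_stronglyMeasurable_left hfmeas hfg_int hg_int
    have hfg_eq : (fun ω => Real.exp (e + d * Z j ω) * Real.exp (c * (Z m ω - Z j ω)))
        = f * g := by
      funext ω
      simp only [Pi.mul_apply, hfdef, hgdef, hSdef]
      rw [hZdiff j m hjm ω]
    rw [hfg_eq]
    filter_upwards [hpull, hcond_g] with ω h1 h2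
    rw [h1, Pi.mul_apply, h2, hEg]
  -- Part 1
  have part1 : ∀ k, 1 ≤ k → k ≤ n →
      (μ[fun ω' => ((μ[(fun ω => Real.exp (b * (Z n ω - a))) | walkFiltration ε k]) ω') ^ 2 |
          walkFiltration ε (k - 1)])
        =ᵐ[μ] fun ω =>
          Real.exp ((n - k : ℕ) * b ^ 2 + 2 * b ^ 2 + 2 * b * (Z (k - 1) ω - a)) := by
    intro k hk1 hkn
    have hA : μ[(fun ω => Real.exp (b * (Z n ω - a))) | walkFiltration ε k]
        =ᵐ[μ] fun ω => Real.exp (-(b * a) + b * Z k ω) * Real.exp ((n - k : ℕ) * b ^ 2 / 2) := by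
      have heq : (fun ω => Real.exp (b * (Z n ω - a)))
          = fun ω => Real.exp (-(b * a) + b * Z k ω) * Real.exp (b * (Z n ω - Z k ω)) := by
        funext ω
        rw [← Real.exp_add]
        congr 1
        ring
      rw [heq]
      exact key k n hkn b b (-(b * a))
    have hB : (fun ω' =>
          ((μ[(fun ω => Real.exp (b * (Z n ω - a))) | walkFiltration ε k]) ω') ^ 2)
        =ᵐ[μ] fun ω =>
          Real.exp ((-(2 * b * a) + (n - k : ℕ) * b ^ 2) + 2 * b * Z (k - 1) ω) *
            Real.exp (2 * b * (Z k ω - Z (k - 1) ω)) := by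
      filter_upwards [hA] with ω hω
      rw [hω, ← Real.exp_add, ← Real.exp_nat_mul, ← Real.exp_add]
      congr 1
      push_cast
      ring
    have hC := condExp_congr_ae (m := walkFiltration ε (k - 1)) hB
    have hD := key (k - 1) k (Nat.sub_le k 1) (2 * b) (2 * b)
      (-(2 * b * a) + (n - k : ℕ) * b ^ 2)
    refine hC.trans (hD.trans ?_)
    have hk' : (k - (k - 1) : ℕ) = 1 := by omega
    refine Filter.EventuallyEq.of_eq ?_
    funext ω
    rw [← Real.exp_add, hk']
    congr 1
    push_cast
    ring
  constructor
  · intro k hk1 hkn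
    exact part1 k hk1 hkn
  · intro k hk1 hkn1
    have hk1n : k + 1 ≤ n := by omega
    have h1 := part1 k hk1 (by omega)
    have h2 := part1 (k + 1) (by omega) hk1n
    simp only [Nat.add_sub_cancel] at h2
    filter_upwards [h1, h2] with ω hω1 hω2
    rw [hω1, hω2, ← Real.exp_sub, ← Real.exp_half]
    congr 1
    have e1 : ((n - (k + 1) : ℕ) : ℝ) = (n : ℝ) - (k : ℝ) - 1 := by
      rw [Nat.cast_sub hk1n]
      push_cast
      ring
    have e2 : ((n - k : ℕ) : ℝ) = (n : ℝ) - (k : ℝ) := by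
      rw [Nat.cast_sub (by omega)]
    rw [e1, e2]
    ring
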